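/- Let u ∈ ℝ⁷ with ‖u‖ = 1. Then the complex structure Jᵤ : v ↦ u × v on {u}^⊥ is compatible with the round metric: for all v, w ∈ ℝ⁷ with ⟨u, v⟩ = 0 and ⟨u, w⟩ = 0 one has ⟨u × v, u × w⟩ = ⟨v, w⟩. -/

import Mathlib

open scoped RealInnerProductSpace

/-- The seven-dimensional cross product on `ℝ⁷`, the unique bilinear map with
`⟪u × v, w⟫ = φ(u,v,w)` for the `G₂`-invariant 3-form
`φ = e¹²³ + e¹⁴⁵ + e¹⁶⁷ + e²⁴⁶ − e²⁵⁷ − e³⁴⁷ − e³⁵⁶`.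
(Indices here are `0`-based: component `i` below is component `i+1` in classical notation.) -/
noncomputable def crossR7 (u v : EuclideanSpace ℝ (Fin 7)) : EuclideanSpace ℝ (Fin 7) :=
  (WithLp.equiv 2 (Fin 7 → ℝ)).symm
    ![u 1 * v 2 - u 2 * v 1 + u 3 * v 4 - u 4 * v 3 + u 5 * v 6 - u 6 * v 5,
      u 2 * v 0 - u 0 * v 2 + u 3 * v 5 - u 5 * v 3 - u 4 * v 6 + u 6 * v 4,
      u 0 * v 1 - u 1 * v 0 - u 3 * v 6 + u 6 * v 3 - u 4 * v 5 + u 5 * v 4,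
      u 4 * v 0 - u 0 * v 4 + u 5 * v 1 - u 1 * v 5 + u 2 * v 6 - u 6 * v 2,
      u 0 * v 3 - u 3 * v 0 + u 1 * v 6 - u 6 * v 1 + u 2 * v 5 - u 5 * v 2,
      u 6 * v 0 - u 0 * v 6 + u 1 * v 3 - u 3 * v 1 + u 4 * v 2 - u 2 * v 4,
      u 0 * v 5 - u 5 * v 0 + u 4 * v 1 - u 1 * v 4 + u 3 * v 2 - u 2 * v 3]

private lemma cons_val_five' {α : Type*} {m : ℕ} (x : α) (u : Fin (m+5) → α) :
    Matrix.vecCons x u 5 = u 4 := rfl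

private lemma cons_val_six' {α : Type*} {m : ℕ} (x : α) (u : Fin (m+6) → α) :
    Matrix.vecCons x u 6 = u 5 := rfl

/-- For a unit vector `u ∈ S⁶`, the complex structure `Jᵤ : v ↦ u × v` on `{u}^⊥` is
compatible with the round metric: `⟪u × v, u × w⟫ = ⟪v, w⟫` for `v, w ⊥ u`. -/
theorem crossR7_metric_compatible (u : EuclideanSpace ℝ (Fin 7)) (hu : ‖u‖ = 1) :
    ∀ v w : EuclideanSpace ℝ (Fin 7), ⟪u, v⟫ = 0 → ⟪u, w⟫ = 0 →
      ⟪crossR7 u v, crossR7 u w⟫ = ⟪v, w⟫ := by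
  intro v w hv hw
  have huu : ⟪u, u⟫ = 1 := by
    rw [real_inner_self_eq_norm_sq, hu]; norm_num
  simp only [crossR7, PiLp.inner_apply, RCLike.inner_apply, conj_trivial,
    Fin.sum_univ_seven, WithLp.equiv_symm_apply, PiLp.toLp_apply, Matrix.cons_val_zero,
    Matrix.cons_val_one, Matrix.head_cons, Matrix.cons_val_two, Matrix.tail_cons,
    Matrix.cons_val_three, Matrix.cons_val_four, cons_val_five', cons_val_six',
    Matrix.cons_val_fin_one] at *
  linear_combination (v 0 * w 0 + v 1 * w 1 + v 2 * w 2 + v 3 * w 3 + v 4 * w 4 + v 5 * w 5 + v 6 * w 6) * huu - (u 0 * w 0 + u 1 * w 1 + u 2 * w 2 + u 3 * w 3 + u 4 * w 4 + u 5 * w 5 + u 6 * w 6) * hv
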